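/- arXiv:2108.01746 — 4 statements merged into one kernel-verified Lean document; each statement's English description precedes it below -/
import Mathlib

section
/- Let T > 0, let p ∈ [0,1), and let u, v, w : [0,T] → ℝ be nonnegative measurable functions such that v, w, v·u and w·u^p are integrable on [0,T]. If u(t) ≤ ∫₀ᵗ v(s)·u(s) ds + ∫₀ᵗ w(s)·u(s)^p ds for all t ∈ [0,T], then, setting q := 1 − p, one has u(t)·exp(−∫₀ᵗ v(s) ds) ≤ ( q·∫₀ᵗ w(s)·exp(−q·∫₀ˢ v(r) dr) ds )^{1/q} for all t ∈ [0,T]. -/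
open MeasureTheory Set

theorem ww_mono (ψ : ℝ → ℝ) (h0 : ∀ s, 0 ≤ ψ s) (hi : Integrable ψ) :
    Monotone (fun b => ∫ r in (0:ℝ)..b, ψ r) := by
  intro a b hab
  have h1 : (∫ r in (0:ℝ)..a, ψ r) + ∫ r in a..b, ψ r = ∫ r in (0:ℝ)..b, ψ r :=
    intervalIntegral.integral_add_adjacent_intervals hi.intervalIntegrable hi.intervalIntegrable
  have h2 : 0 ≤ ∫ r in a..b, ψ r :=
    intervalIntegral.integral_nonneg hab (fun x _ => h0 x)
  simp only []
  linarith

theorem ww_primitive_nonneg (ψ : ℝ → ℝ) (h0 : ∀ s, 0 ≤ ψ s)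
    (hneg : ∀ s, s < 0 → ψ s = 0) (hi : Integrable ψ) :
    ∀ s, 0 ≤ ∫ r in (0:ℝ)..s, ψ r := by
  intro s
  rcases le_or_gt 0 s with hs | hs
  · exact intervalIntegral.integral_nonneg hs (fun x _ => h0 x)
  · rw [intervalIntegral.integral_symm, intervalIntegral.integral_of_le hs.le,
      integral_Ioc_eq_integral_Ioo]
    have h2 : ∫ r in Ioo s 0, ψ r = ∫ _r in Ioo s 0, (0:ℝ) :=
      setIntegral_congr_fun measurableSet_Ioo (fun r hr => hneg r hr.2)
    rw [h2]
    simp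

theorem ww_bound_mul (f g : ℝ → ℝ) {s : Set ℝ} (hs : MeasurableSet s)
    (hf : IntegrableOn f s) (hg : Measurable g) {C : ℝ}
    (hC : ∀ x ∈ s, |g x| ≤ C) : IntegrableOn (fun x => f x * g x) s := by
  refine Integrable.mono (hf.norm.mul_const C)
    (hf.aestronglyMeasurable.mul hg.aestronglyMeasurable) ?_
  rw [ae_restrict_iff' hs]
  filter_upwards with x hx
  rw [norm_mul]
  have h0C : 0 ≤ C := (abs_nonneg _).trans (hC x hx)
  calc ‖f x‖ * ‖g x‖ ≤ ‖f x‖ * C := by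
        refine mul_le_mul_of_nonneg_left ?_ (norm_nonneg _)
        rw [Real.norm_eq_abs]; exact hC x hx
    _ ≤ ‖‖f x‖ * C‖ := le_abs_self _

theorem ww_fubini (G K : ℝ → ℝ) (hGm : Measurable G) (hKm : Measurable K)
    (hG : Integrable G) (hK : Integrable K) (t : ℝ) :
    ∫ r in Ioc (0:ℝ) t, G r * (∫ x in Ioc r t, K x)
      = ∫ x in Ioc (0:ℝ) t, K x * (∫ r in Ioc (0:ℝ) x, G r) := by
  set μ : Measure ℝ := volume.restrict (Ioc (0:ℝ) t) with hμdef
  have hSm : MeasurableSet {q : ℝ × ℝ | q.1 < q.2} := measurableSet_lt measurable_fst measurable_snd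
  set F0 : ℝ × ℝ → ℝ := ({q : ℝ × ℝ | q.1 < q.2}).indicator (fun q => G q.1 * K q.2) with hF0def
  set F : ℝ → ℝ → ℝ := fun r x => F0 (r, x) with hFdef
  have hFunc : Function.uncurry F = F0 := by
    funext q
    rfl
  have hFm : AEStronglyMeasurable (Function.uncurry F) (μ.prod μ) := by
    rw [hFunc, hF0def]
    exact (((hGm.comp measurable_fst).mul (hKm.comp measurable_snd)).indicator hSm).aestronglyMeasurable
  have hFval : ∀ r x : ℝ, F r x = if r < x then G r * K x else 0 := by
    intro r x
    rw [hFdef]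
    simp only [hF0def, Set.indicator_apply, Set.mem_setOf_eq]
  have hFint : Integrable (Function.uncurry F) (μ.prod μ) := by
    refine Integrable.mono ((hG.restrict).mul_prod (hK.restrict)) hFm ?_
    filter_upwards with q
    show ‖F q.1 q.2‖ ≤ ‖G q.1 * K q.2‖
    rw [hFval]
    by_cases h : q.1 < q.2
    · simp [h]
    · simp only [h, if_false, norm_zero]
      positivity
  have hswap := MeasureTheory.integral_integral_swap hFint
  have hL : ∫ r, ∫ x, F r x ∂μ ∂μ = ∫ r in Ioc (0:ℝ) t, G r * (∫ x in Ioc r t, K x) := by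
    refine setIntegral_congr_fun measurableSet_Ioc (fun r hr => ?_)
    have h1 : ∀ x, F r x = (Ioi r).indicator (fun x => G r * K x) x := by
      intro x
      rw [hFval]
      simp only [Set.indicator_apply, Set.mem_Ioi]
    calc ∫ x, F r x ∂μ = ∫ x in Ioc (0:ℝ) t, (Ioi r).indicator (fun x => G r * K x) x := by
          rw [hμdef]; exact integral_congr_ae (Filter.Eventually.of_forall (fun x => h1 x))
      _ = ∫ x in Ioc (0:ℝ) t ∩ Ioi r, G r * K x := setIntegral_indicator measurableSet_Ioi
      _ = ∫ x in Ioc r t, G r * K x := by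
          have hset : Ioc (0:ℝ) t ∩ Ioi r = Ioc r t := by
            ext x
            simp only [mem_inter_iff, mem_Ioc, mem_Ioi]
            constructor
            · rintro ⟨⟨_, hxt⟩, hrx⟩; exact ⟨hrx, hxt⟩
            · rintro ⟨hrx, hxt⟩; exact ⟨⟨hr.1.trans hrx, hxt⟩, hrx⟩
          rw [hset]
      _ = G r * ∫ x in Ioc r t, K x := integral_const_mul _ _
  have hR : ∫ x, ∫ r, F r x ∂μ ∂μ = ∫ x in Ioc (0:ℝ) t, K x * (∫ r in Ioc (0:ℝ) x, G r) := by
    refine setIntegral_congr_fun measurableSet_Ioc (fun x hx => ?_)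
    have h1 : ∀ r, F r x = (Iio x).indicator (fun r => G r * K x) r := by
      intro r
      rw [hFval]
      simp only [Set.indicator_apply, Set.mem_Iio]
    calc ∫ r, F r x ∂μ = ∫ r in Ioc (0:ℝ) t, (Iio x).indicator (fun r => G r * K x) r := by
          rw [hμdef]; exact integral_congr_ae (Filter.Eventually.of_forall (fun r => h1 r))
      _ = ∫ r in Ioc (0:ℝ) t ∩ Iio x, G r * K x := setIntegral_indicator measurableSet_Iio
      _ = ∫ r in Ioo (0:ℝ) x, G r * K x := by
          have hset : Ioc (0:ℝ) t ∩ Iio x = Ioo (0:ℝ) x := by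
            ext r
            simp only [mem_inter_iff, mem_Ioc, mem_Ioo, mem_Iio]
            constructor
            · rintro ⟨⟨hr0, _⟩, hrx⟩; exact ⟨hr0, hrx⟩
            · rintro ⟨hr0, hrx⟩; exact ⟨⟨hr0, hrx.le.trans hx.2⟩, hrx⟩
          rw [hset]
      _ = ∫ r in Ioc (0:ℝ) x, G r * K x := (integral_Ioc_eq_integral_Ioo).symm
      _ = (∫ r in Ioc (0:ℝ) x, G r) * K x := integral_mul_const _ _
      _ = K x * ∫ r in Ioc (0:ℝ) x, G r := mul_comm _ _
  rw [← hL, ← hR]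
  exact hswap


theorem ww_pushforward (ψ : ℝ → ℝ) (hm : Measurable ψ) (h0 : ∀ s, 0 ≤ ψ s)
    (hi : Integrable ψ) (g : ℝ → ℝ) (hg : Continuous g) (t : ℝ) (ht : 0 ≤ t) :
    ∫ s in (0:ℝ)..t, ψ s * g (∫ r in (0:ℝ)..s, ψ r)
      = ∫ x in (0:ℝ)..(∫ r in (0:ℝ)..t, ψ r), g x := by
  set Ψ : ℝ → ℝ := fun b => ∫ r in (0:ℝ)..b, ψ r with hΨdef
  have hΨc : Continuous Ψ := hi.continuous_primitive 0
  have hΨmono : Monotone Ψ := by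
    intro a b hab
    have h1 : Ψ a + ∫ r in a..b, ψ r = Ψ b :=
      intervalIntegral.integral_add_adjacent_intervals hi.intervalIntegrable
        hi.intervalIntegrable
    have h2 : 0 ≤ ∫ r in a..b, ψ r :=
      intervalIntegral.integral_nonneg hab (fun x _ => h0 x)
    linarith
  have hΨ0 : Ψ 0 = 0 := intervalIntegral.integral_same
  have hΨt0 : 0 ≤ Ψ t := hΨ0 ▸ hΨmono ht
  set μ : Measure ℝ := volume.restrict (Ioc 0 t) with hμdef
  set ν : Measure ℝ := μ.withDensity (fun s => ENNReal.ofReal (ψ s)) with hνdef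
  have hνapp : ∀ A : Set ℝ, MeasurableSet A →
      ν A = ∫⁻ s in A ∩ Ioc 0 t, ENNReal.ofReal (ψ s) := by
    intro A hA
    rw [hνdef, withDensity_apply _ hA, hμdef, Measure.restrict_restrict hA]
  have hfin : ∀ a b : ℝ, (∫⁻ s in Ioc a b, ENNReal.ofReal (ψ s)) = ENNReal.ofReal (∫ s in Ioc a b, ψ s) := by
    intro a b
    rw [ofReal_integral_eq_lintegral_ofReal (hi.integrableOn)
      (Filter.Eventually.of_forall (fun x => h0 x))]
  haveI : IsFiniteMeasure ν := by
    constructor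
    rw [hνapp univ MeasurableSet.univ, univ_inter, hfin]
    exact ENNReal.ofReal_lt_top
  have key : ν.map Ψ = volume.restrict (Ioc 0 (Ψ t)) := by
    refine Measure.ext_of_Iic _ _ (fun x => ?_)
    rw [Measure.map_apply hΨc.measurable measurableSet_Iic,
      hνapp _ (hΨc.measurable measurableSet_Iic),
      Measure.restrict_apply measurableSet_Iic]
    rcases lt_or_ge x 0 with hx | hx
    · have h1 : Ψ ⁻¹' Iic x ∩ Ioc 0 t = ∅ := by
        ext s
        simp only [mem_inter_iff, mem_preimage, mem_Iic, mem_Ioc, mem_empty_iff_false,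
          iff_false, not_and, and_imp]
        intro hsx hs0
        exfalso
        have : (0:ℝ) ≤ Ψ s := hΨ0 ▸ hΨmono hs0.le
        linarith
      have h2 : Iic x ∩ Ioc 0 (Ψ t) = ∅ := by
        ext s
        simp only [mem_inter_iff, mem_Iic, mem_Ioc, mem_empty_iff_false, iff_false, not_and,
          and_imp]
        intro hsx hs0
        exfalso; linarith
      rw [h1, h2]; simp
    · set S : Set ℝ := {s | s ∈ Icc 0 t ∧ Ψ s ≤ x} with hSdef
      have hS0 : (0:ℝ) ∈ S := ⟨⟨le_refl 0, ht⟩, by rw [hΨ0]; exact hx⟩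
      have hSbdd : BddAbove S := ⟨t, fun s hs => hs.1.2⟩
      have hSclosed : IsClosed S := by
        have : S = Icc 0 t ∩ Ψ ⁻¹' Iic x := rfl
        rw [this]
        exact isClosed_Icc.inter (isClosed_Iic.preimage hΨc)
      set σ : ℝ := sSup S with hσdef
      have hσS : σ ∈ S := hSclosed.csSup_mem ⟨0, hS0⟩ hSbdd
      have hσ0 : 0 ≤ σ := hσS.1.1
      have hσt : σ ≤ t := hσS.1.2
      have hmin : Ψ σ = min x (Ψ t) := by
        rcases le_or_gt (Ψ t) x with hc | hc
        · have htS : t ∈ S := ⟨⟨ht, le_refl t⟩, hc⟩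
          have : σ = t := le_antisymm hσt (le_csSup hSbdd htS)
          rw [this, min_eq_right hc]
        · rw [min_eq_left hc.le]
          refine le_antisymm hσS.2 ?_
          by_contra hlt
          push_neg at hlt
          have hσlt : σ < t := by
            rcases eq_or_lt_of_le hσt with h | h
            · exfalso; rw [h] at hlt; linarith
            · exact h
          have hopen : Ψ ⁻¹' Iio x ∈ nhds σ :=
            (isOpen_Iio.preimage hΨc).mem_nhds hlt
          have hIoc : Ioc σ t ∈ nhdsWithin σ (Ioi σ) :=
            Ioc_mem_nhdsGT_of_mem ⟨le_refl σ, hσlt⟩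
          have hmem : Ψ ⁻¹' Iio x ∩ Ioc σ t ∈ nhdsWithin σ (Ioi σ) :=
            Filter.inter_mem (nhdsWithin_le_nhds hopen) hIoc
          obtain ⟨s, hs1, hs2⟩ := Filter.nonempty_of_mem hmem
          have hsS : s ∈ S := ⟨⟨hσ0.trans hs2.1.le, hs2.2⟩, le_of_lt hs1⟩
          exact absurd (le_csSup hSbdd hsS) (not_le.mpr hs2.1)
      have hpre : Ψ ⁻¹' Iic x ∩ Ioc 0 t = Ioc 0 σ := by
        ext s
        simp only [mem_inter_iff, mem_preimage, mem_Iic, mem_Ioc]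
        constructor
        · rintro ⟨hsx, hs0, hst⟩
          exact ⟨hs0, le_csSup hSbdd ⟨⟨hs0.le, hst⟩, hsx⟩⟩
        · rintro ⟨hs0, hsσ⟩
          exact ⟨(hΨmono hsσ).trans hσS.2, hs0, hsσ.trans hσt⟩
      rw [hpre, hfin, inter_comm, Ioc_inter_Iic, Real.volume_Ioc]
      have : ∫ s in Ioc 0 σ, ψ s = Ψ σ := (intervalIntegral.integral_of_le hσ0).symm
      rw [this, hmin]
      congr 1
      rw [min_comm]
      ring
  have hmeas_nn : Measurable fun s => (ψ s).toNNReal := hm.real_toNNReal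
  calc ∫ s in (0:ℝ)..t, ψ s * g (Ψ s)
      = ∫ s in Ioc (0:ℝ) t, ψ s * g (Ψ s) := intervalIntegral.integral_of_le ht
    _ = ∫ s, (ψ s).toNNReal • g (Ψ s) ∂μ := by
        refine integral_congr_ae (Filter.Eventually.of_forall (fun s => ?_))
        show ψ s * g (Ψ s) = (ψ s).toNNReal • g (Ψ s)
        rw [NNReal.smul_def, Real.coe_toNNReal _ (h0 s), smul_eq_mul]
    _ = ∫ s, g (Ψ s) ∂ν := (integral_withDensity_eq_integral_smul hmeas_nn _).symm
    _ = ∫ x, g x ∂(ν.map Ψ) := (integral_map hΨc.measurable.aemeasurable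
        hg.aestronglyMeasurable).symm
    _ = ∫ x in Ioc (0:ℝ) (Ψ t), g x := by rw [key]
    _ = ∫ x in (0:ℝ)..(Ψ t), g x := (intervalIntegral.integral_of_le hΨt0).symm

/-- Willett–Wong version of Gronwall's inequality. -/
theorem willett_wong_gronwall
    (T p : ℝ) (hT : 0 < T) (hp0 : 0 ≤ p) (hp1 : p < 1)
    (u v w : ℝ → ℝ)
    (hu_meas : Measurable u) (hv_meas : Measurable v) (hw_meas : Measurable w)
    (hu_nonneg : ∀ t ∈ Set.Icc (0:ℝ) T, 0 ≤ u t)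
    (hv_nonneg : ∀ t ∈ Set.Icc (0:ℝ) T, 0 ≤ v t)
    (hw_nonneg : ∀ t ∈ Set.Icc (0:ℝ) T, 0 ≤ w t)
    (hv_int : IntegrableOn v (Set.Icc (0:ℝ) T))
    (hw_int : IntegrableOn w (Set.Icc (0:ℝ) T))
    (hvu_int : IntegrableOn (fun s => v s * u s) (Set.Icc (0:ℝ) T))
    (hwup_int : IntegrableOn (fun s => w s * u s ^ p) (Set.Icc (0:ℝ) T))
    (hmain : ∀ t ∈ Set.Icc (0:ℝ) T,
      u t ≤ (∫ s in (0:ℝ)..t, v s * u s) + ∫ s in (0:ℝ)..t, w s * u s ^ p) :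
    ∀ t ∈ Set.Icc (0:ℝ) T,
      u t * Real.exp (-∫ s in (0:ℝ)..t, v s)
        ≤ ((1 - p) * ∫ s in (0:ℝ)..t,
            w s * Real.exp (-(1 - p) * ∫ r in (0:ℝ)..s, v r)) ^ ((1:ℝ) / (1 - p)) := by
  have hq0 : (0:ℝ) < 1 - p := by linarith
  set q : ℝ := 1 - p with hqdef
  set κ : ℝ := 1 / q with hκdef
  have hκ0 : 0 < κ := one_div_pos.mpr hq0
  have hκq : κ * q = 1 := by
    rw [hκdef]; field_simp
  -- indicator versions
  set vI : ℝ → ℝ := (Icc (0:ℝ) T).indicator v with hvIdef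
  set wI : ℝ → ℝ := (Icc (0:ℝ) T).indicator w with hwIdef
  set h0fun : ℝ → ℝ := fun s => v s * u s + w s * u s ^ p with hh0def
  set hI : ℝ → ℝ := (Icc (0:ℝ) T).indicator h0fun with hhIdef
  have hvI_meas : Measurable vI := hv_meas.indicator measurableSet_Icc
  have hwI_meas : Measurable wI := hw_meas.indicator measurableSet_Icc
  have hup_meas : Measurable (fun s => u s ^ p) :=
    (Real.continuous_rpow_const hp0).measurable.comp hu_meas
  have hh0_meas : Measurable h0fun := (hv_meas.mul hu_meas).add (hw_meas.mul hup_meas)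
  have hhI_meas : Measurable hI := hh0_meas.indicator measurableSet_Icc
  have hvI_nonneg : ∀ s, 0 ≤ vI s := fun s =>
    Set.indicator_nonneg (fun x hx => hv_nonneg x hx) s
  have hwI_nonneg : ∀ s, 0 ≤ wI s := fun s =>
    Set.indicator_nonneg (fun x hx => hw_nonneg x hx) s
  have hh0_nonneg : ∀ s ∈ Icc (0:ℝ) T, 0 ≤ h0fun s := fun s hs =>
    add_nonneg (mul_nonneg (hv_nonneg s hs) (hu_nonneg s hs))
      (mul_nonneg (hw_nonneg s hs) (Real.rpow_nonneg (hu_nonneg s hs) p))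
  have hhI_nonneg : ∀ s, 0 ≤ hI s := fun s => Set.indicator_nonneg hh0_nonneg s
  have hvI_zero : ∀ s, s < 0 → vI s = 0 := fun s hs =>
    Set.indicator_of_notMem (fun h => absurd h.1 (not_le.mpr hs)) v
  have hwI_zero : ∀ s, s < 0 → wI s = 0 := fun s hs =>
    Set.indicator_of_notMem (fun h => absurd h.1 (not_le.mpr hs)) w
  have hvI_int : Integrable vI := (integrable_indicator_iff measurableSet_Icc).mpr hv_int
  have hwI_int : Integrable wI := (integrable_indicator_iff measurableSet_Icc).mpr hw_int
  have hhI_int : Integrable hI :=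
    (integrable_indicator_iff measurableSet_Icc).mpr (hvu_int.add hwup_int)
  -- V and E
  set V : ℝ → ℝ := fun s => ∫ r in (0:ℝ)..s, vI r with hVdef
  have hV_cont : Continuous V := hvI_int.continuous_primitive 0
  have hV_nonneg : ∀ s, 0 ≤ V s := ww_primitive_nonneg vI hvI_nonneg hvI_zero hvI_int
  set E : ℝ → ℝ := fun s => Real.exp (-V s) with hEdef
  have hE_cont : Continuous E := Real.continuous_exp.comp hV_cont.neg
  have hE_pos : ∀ s, 0 < E s := fun s => Real.exp_pos _
  have hE_le_one : ∀ s, E s ≤ 1 := by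
    intro s
    calc E s ≤ Real.exp 0 := Real.exp_le_exp.mpr (by linarith [hV_nonneg s])
      _ = 1 := Real.exp_zero
  -- a and z
  set a : ℝ → ℝ := fun s => ∫ r in (0:ℝ)..s, hI r with hadef
  have ha_cont : Continuous a := hhI_int.continuous_primitive 0
  have ha_mono : Monotone a := ww_mono hI hhI_nonneg hhI_int
  have ha_nonneg : ∀ s, 0 ≤ a s := ww_primitive_nonneg hI hhI_nonneg
    (fun s hs => Set.indicator_of_notMem (fun h => absurd h.1 (not_le.mpr hs)) h0fun) hhI_int
  set z : ℝ → ℝ := fun s => a s * E s with hzdef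
  have hz_cont : Continuous z := ha_cont.mul hE_cont
  have hz_nonneg : ∀ s, 0 ≤ z s := fun s => mul_nonneg (ha_nonneg s) (hE_pos s).le
  -- W and Ω
  set W : ℝ → ℝ := fun s => wI s * Real.exp (-(q * V s)) with hWdef
  have hW_meas : Measurable W :=
    hwI_meas.mul (Real.continuous_exp.comp (continuous_const.mul hV_cont).neg).measurable
  have hW_nonneg : ∀ s, 0 ≤ W s := fun s => mul_nonneg (hwI_nonneg s) (Real.exp_pos _).le
  have hW_zero : ∀ s, s < 0 → W s = 0 := by
    intro s hs
    show wI s * Real.exp (-(q * V s)) = 0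
    rw [hwI_zero s hs, zero_mul]
  have hW_le : ∀ s, W s ≤ wI s := by
    intro s
    have h1 : Real.exp (-(q * V s)) ≤ 1 := by
      calc Real.exp (-(q * V s)) ≤ Real.exp 0 := by
            refine Real.exp_le_exp.mpr ?_
            have := mul_nonneg hq0.le (hV_nonneg s)
            linarith
        _ = 1 := Real.exp_zero
    calc W s = wI s * Real.exp (-(q * V s)) := rfl
      _ ≤ wI s * 1 := mul_le_mul_of_nonneg_left h1 (hwI_nonneg s)
      _ = wI s := mul_one _
  have hW_int : Integrable W := by
    refine hwI_int.mono hW_meas.aestronglyMeasurable ?_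
    filter_upwards with s
    rw [Real.norm_eq_abs, Real.norm_eq_abs, abs_of_nonneg (hW_nonneg s),
      abs_of_nonneg (hwI_nonneg s)]
    exact hW_le s
  set Ω : ℝ → ℝ := fun s => ∫ r in (0:ℝ)..s, W r with hΩdef
  have hΩ_cont : Continuous Ω := hW_int.continuous_primitive 0
  have hΩ_mono : Monotone Ω := ww_mono W hW_nonneg hW_int
  have hΩ_nonneg : ∀ s, 0 ≤ Ω s := ww_primitive_nonneg W hW_nonneg hW_zero hW_int
  -- congruence on [0, T]
  have hVeq : ∀ s ∈ Icc (0:ℝ) T, V s = ∫ r in (0:ℝ)..s, v r := by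
    intro s hs
    refine intervalIntegral.integral_congr (fun r hr => ?_)
    rw [uIcc_of_le hs.1] at hr
    have hrI : r ∈ Icc (0:ℝ) T := ⟨hr.1, hr.2.trans hs.2⟩
    rw [hvIdef]
    exact Set.indicator_of_mem hrI v
  have hu_le_a : ∀ s ∈ Icc (0:ℝ) T, u s ≤ a s := by
    intro s hs
    refine (hmain s hs).trans (le_of_eq ?_)
    have h1 : IntervalIntegrable (fun r => v r * u r) volume 0 s := by
      refine IntegrableOn.intervalIntegrable ?_
      rw [uIcc_of_le hs.1]
      exact hvu_int.mono_set (Icc_subset_Icc le_rfl hs.2)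
    have h2 : IntervalIntegrable (fun r => w r * u r ^ p) volume 0 s := by
      refine IntegrableOn.intervalIntegrable ?_
      rw [uIcc_of_le hs.1]
      exact hwup_int.mono_set (Icc_subset_Icc le_rfl hs.2)
    rw [← intervalIntegral.integral_add h1 h2]
    refine intervalIntegral.integral_congr (fun r hr => ?_)
    rw [uIcc_of_le hs.1] at hr
    have hrI : r ∈ Icc (0:ℝ) T := ⟨hr.1, hr.2.trans hs.2⟩
    rw [hhIdef]
    exact (Set.indicator_of_mem hrI h0fun).symm
  -- the exponential integral identity
  have hExpInt : ∀ b : ℝ, ∫ x in (0:ℝ)..b, Real.exp (-x) = 1 - Real.exp (-b) := by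
    intro b
    have hD : ∀ x ∈ uIcc (0:ℝ) b, HasDerivAt (fun y => -Real.exp (-y)) (Real.exp (-x)) x := by
      intro x _
      have h1 : HasDerivAt (fun y : ℝ => -y) (-1) x := (hasDerivAt_id x).neg
      have h2 := (Real.hasDerivAt_exp (-x)).comp x h1
      have h3 := h2.neg
      simp at h3; exact h3
    rw [intervalIntegral.integral_eq_sub_of_hasDerivAt hD
      ((Real.continuous_exp.comp continuous_neg).intervalIntegrable 0 b)]
    simp only [neg_zero, Real.exp_zero]
    ring
  have hvE : ∀ s, 0 ≤ s → ∫ r in (0:ℝ)..s, vI r * E r = 1 - E s := by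
    intro s hs
    have h1 := ww_pushforward vI hvI_meas hvI_nonneg hvI_int (fun x => Real.exp (-x))
      (Real.continuous_exp.comp continuous_neg) s hs
    calc ∫ r in (0:ℝ)..s, vI r * E r = ∫ x in (0:ℝ)..(V s), Real.exp (-x) := h1
      _ = 1 - E s := hExpInt (V s)
  -- integrability of products
  have h_vE_int : Integrable (fun r => vI r * E r) := by
    refine hvI_int.mono ((hvI_meas.mul hE_cont.measurable)).aestronglyMeasurable ?_
    filter_upwards with s
    rw [Real.norm_eq_abs, Real.norm_eq_abs,
      abs_of_nonneg (mul_nonneg (hvI_nonneg s) (hE_pos s).le), abs_of_nonneg (hvI_nonneg s)]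
    calc vI s * E s ≤ vI s * 1 := mul_le_mul_of_nonneg_left (hE_le_one s) (hvI_nonneg s)
      _ = vI s := mul_one _
  have h_hIE_int : Integrable (fun x => hI x * E x) := by
    refine hhI_int.mono ((hhI_meas.mul hE_cont.measurable)).aestronglyMeasurable ?_
    filter_upwards with s
    rw [Real.norm_eq_abs, Real.norm_eq_abs,
      abs_of_nonneg (mul_nonneg (hhI_nonneg s) (hE_pos s).le), abs_of_nonneg (hhI_nonneg s)]
    calc hI s * E s ≤ hI s * 1 := mul_le_mul_of_nonneg_left (hE_le_one s) (hhI_nonneg s)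
      _ = hI s := mul_one _
  have hvEa_int : ∀ t' ∈ Icc (0:ℝ) T, IntegrableOn (fun r => vI r * E r * a r) (Ioc 0 t') := by
    intro t' ht'
    refine ww_bound_mul _ a measurableSet_Ioc h_vE_int.integrableOn ha_cont.measurable
      (C := a T) ?_
    intro x hx
    rw [abs_of_nonneg (ha_nonneg x)]
    exact ha_mono (hx.2.trans ht'.2)
  have hWzp_int : ∀ t' ∈ Icc (0:ℝ) T, IntegrableOn (fun x => W x * z x ^ p) (Ioc 0 t') := by
    intro t' ht'
    refine ww_bound_mul W (fun x => z x ^ p) measurableSet_Ioc hW_int.integrableOn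
      ((Real.continuous_rpow_const hp0).comp hz_cont).measurable (C := (a T) ^ p) ?_
    intro x hx
    rw [abs_of_nonneg (Real.rpow_nonneg (hz_nonneg x) p)]
    refine Real.rpow_le_rpow (hz_nonneg x) ?_ hp0
    calc z x = a x * E x := rfl
      _ ≤ a x * 1 := mul_le_mul_of_nonneg_left (hE_le_one x) (ha_nonneg x)
      _ = a x := mul_one _
      _ ≤ a T := ha_mono (hx.2.trans ht'.2)
  -- STEP 1 : z t ≤ ∫_{(0,t]} W z^p
  have key1 : ∀ t ∈ Icc (0:ℝ) T, z t ≤ ∫ s in Ioc (0:ℝ) t, W s * z s ^ p := by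
    intro t ht
    have ht0 : (0:ℝ) ≤ t := ht.1
    have htT : t ≤ T := ht.2
    have hsub : Ioc (0:ℝ) t ⊆ Icc 0 T := fun x hx => ⟨hx.1.le, hx.2.trans htT⟩
    have hA : IntegrableOn (fun r => vI r * E r * a r) (Ioc 0 t) := hvEa_int t ht
    have hB : IntegrableOn (fun r => vI r * E r * (a t - a r)) (Ioc 0 t) := by
      refine ww_bound_mul _ (fun r => a t - a r) measurableSet_Ioc h_vE_int.integrableOn
        (continuous_const.sub ha_cont).measurable (C := a T) ?_
      intro x hx
      rw [abs_of_nonneg (sub_nonneg.mpr (ha_mono hx.2))]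
      have h1 : 0 ≤ a x := ha_nonneg x
      have h2 : a t ≤ a T := ha_mono htT
      linarith
    have hzid : z t = ∫ x in Ioc (0:ℝ) t, (hI x * E x - vI x * E x * a x) := by
      have e1 : E t = 1 - ∫ r in Ioc (0:ℝ) t, vI r * E r := by
        have h := hvE t ht0
        rw [intervalIntegral.integral_of_le ht0] at h
        linarith
      have e2 : (∫ r in Ioc (0:ℝ) t, vI r * E r) * a t
          = (∫ r in Ioc (0:ℝ) t, vI r * E r * a r)
            + ∫ r in Ioc (0:ℝ) t, vI r * E r * (a t - a r) := by
        rw [← MeasureTheory.integral_add hA hB, ← MeasureTheory.integral_mul_const]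
        refine integral_congr_ae (Filter.Eventually.of_forall (fun r => ?_))
        show vI r * E r * a t = vI r * E r * a r + vI r * E r * (a t - a r)
        ring
      have f1 : ∫ r in Ioc (0:ℝ) t, vI r * E r * (a t - a r)
          = ∫ r in Ioc (0:ℝ) t, vI r * E r * (∫ x in Ioc r t, hI x) := by
        refine setIntegral_congr_fun measurableSet_Ioc (fun r hr => ?_)
        have hadd : (∫ x in (0:ℝ)..r, hI x) + ∫ x in r..t, hI x = ∫ x in (0:ℝ)..t, hI x :=
          intervalIntegral.integral_add_adjacent_intervals hhI_int.intervalIntegrable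
            hhI_int.intervalIntegrable
        rw [intervalIntegral.integral_of_le hr.2] at hadd
        have : a t - a r = ∫ x in Ioc r t, hI x := by
          show (∫ x in (0:ℝ)..t, hI x) - ∫ x in (0:ℝ)..r, hI x = ∫ x in Ioc r t, hI x
          linarith
        rw [this]
      have f2 : ∫ r in Ioc (0:ℝ) t, vI r * E r * (∫ x in Ioc r t, hI x)
          = ∫ x in Ioc (0:ℝ) t, hI x * (∫ r in Ioc (0:ℝ) x, vI r * E r) :=
        ww_fubini (fun r => vI r * E r) hI (hvI_meas.mul hE_cont.measurable) hhI_meas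
          h_vE_int hhI_int t
      have f3 : ∫ x in Ioc (0:ℝ) t, hI x * (∫ r in Ioc (0:ℝ) x, vI r * E r)
          = ∫ x in Ioc (0:ℝ) t, (hI x - hI x * E x) := by
        refine setIntegral_congr_fun measurableSet_Ioc (fun x hx => ?_)
        have h4 : ∫ r in Ioc (0:ℝ) x, vI r * E r = 1 - E x := by
          rw [← intervalIntegral.integral_of_le hx.1.le]
          exact hvE x hx.1.le
        rw [h4]
        ring
      have f4 : ∫ x in Ioc (0:ℝ) t, (hI x - hI x * E x)
          = (∫ x in Ioc (0:ℝ) t, hI x) - ∫ x in Ioc (0:ℝ) t, hI x * E x :=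
        MeasureTheory.integral_sub hhI_int.integrableOn h_hIE_int.integrableOn
      have e3 : ∫ r in Ioc (0:ℝ) t, vI r * E r * (a t - a r)
          = (∫ x in Ioc (0:ℝ) t, hI x) - ∫ x in Ioc (0:ℝ) t, hI x * E x :=
        f1.trans (f2.trans (f3.trans f4))
      have e4 : a t = ∫ x in Ioc (0:ℝ) t, hI x := by
        show (∫ x in (0:ℝ)..t, hI x) = ∫ x in Ioc (0:ℝ) t, hI x
        exact intervalIntegral.integral_of_le ht0
      have e5 : ∫ x in Ioc (0:ℝ) t, (hI x * E x - vI x * E x * a x)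
          = (∫ x in Ioc (0:ℝ) t, hI x * E x) - ∫ x in Ioc (0:ℝ) t, vI x * E x * a x :=
        MeasureTheory.integral_sub h_hIE_int.integrableOn hA
      have e6 : z t = a t * (1 - ∫ r in Ioc (0:ℝ) t, vI r * E r) := by
        show a t * E t = _
        rw [e1]
      rw [e6, e5]
      linear_combination (-1 : ℝ) * e2 - e3 + e4
    have hpt : ∀ x ∈ Ioc (0:ℝ) t, hI x * E x - vI x * E x * a x ≤ W x * z x ^ p := by
      intro x hx
      have hxI : x ∈ Icc (0:ℝ) T := hsub hx
      have hxu : 0 ≤ u x := hu_nonneg x hxI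
      have hxa : 0 ≤ a x := ha_nonneg x
      have hua : u x ≤ a x := hu_le_a x hxI
      have hIx : hI x = v x * u x + w x * u x ^ p := by
        rw [hhIdef]; exact Set.indicator_of_mem hxI h0fun
      have hvIx : vI x = v x := by
        rw [hvIdef]; exact Set.indicator_of_mem hxI v
      have hwIx : wI x = w x := by
        rw [hwIdef]; exact Set.indicator_of_mem hxI w
      have hWz : W x * z x ^ p = w x * a x ^ p * E x := by
        have hz1 : (a x * E x) ^ p = a x ^ p * E x ^ p := Real.mul_rpow hxa (hE_pos x).le
        have hz2 : Real.exp (-V x) ^ p = Real.exp (-V x * p) := (Real.exp_mul (-V x) p).symm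
        have hsum : -(q * V x) + -V x * p = -V x := by rw [hqdef]; ring
        show wI x * Real.exp (-(q * V x)) * (a x * E x) ^ p = w x * a x ^ p * E x
        rw [hwIx, hz1]
        show w x * Real.exp (-(q * V x)) * (a x ^ p * Real.exp (-V x) ^ p)
            = w x * a x ^ p * Real.exp (-V x)
        rw [hz2]
        calc w x * Real.exp (-(q * V x)) * (a x ^ p * Real.exp (-V x * p))
            = w x * a x ^ p * (Real.exp (-(q * V x)) * Real.exp (-V x * p)) := by ring
          _ = w x * a x ^ p * Real.exp (-(q * V x) + -V x * p) := by rw [Real.exp_add]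
          _ = w x * a x ^ p * Real.exp (-V x) := by rw [hsum]
      rw [hIx, hvIx, hWz]
      have h2 : u x ^ p ≤ a x ^ p := Real.rpow_le_rpow hxu hua hp0
      have h3 : w x * u x ^ p * E x ≤ w x * a x ^ p * E x :=
        mul_le_mul_of_nonneg_right (mul_le_mul_of_nonneg_left h2 (hw_nonneg x hxI))
          (hE_pos x).le
      have h4 : 0 ≤ v x * E x * (a x - u x) :=
        mul_nonneg (mul_nonneg (hv_nonneg x hxI) (hE_pos x).le) (sub_nonneg.mpr hua)
      nlinarith [h3, h4]
    have hlhs_int : IntegrableOn (fun x => hI x * E x - vI x * E x * a x) (Ioc 0 t) :=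
      h_hIE_int.integrableOn.sub hA
    rw [hzid]
    exact setIntegral_mono_on hlhs_int (hWzp_int t ht) measurableSet_Ioc hpt
  -- STEP 2 : comparison with the explicit supersolution
  have key2 : ∀ ε : ℝ, 0 < ε → ∀ s ∈ Icc (0:ℝ) T, z s ≤ (q * Ω s + ε) ^ κ := by
    intro ε hε
    set c : ℝ → ℝ := fun s => (q * Ω s + ε) ^ κ with hcdef
    have hbase_pos : ∀ s, 0 < q * Ω s + ε := by
      intro s
      have := mul_nonneg hq0.le (hΩ_nonneg s)
      linarith
    have hc_cont : Continuous c :=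
      (Real.continuous_rpow_const hκ0.le).comp ((continuous_const.mul hΩ_cont).add continuous_const)
    have hc_nonneg : ∀ s, 0 ≤ c s := fun s => Real.rpow_nonneg (hbase_pos s).le κ
    have hc_le : ∀ s ∈ Icc (0:ℝ) T, c s ≤ c T := by
      intro s hs
      refine Real.rpow_le_rpow (hbase_pos s).le ?_ hκ0.le
      have h1 : Ω s ≤ Ω T := hΩ_mono hs.2
      have h2 : q * Ω s ≤ q * Ω T := mul_le_mul_of_nonneg_left h1 hq0.le
      linarith
    have hcid : ∀ s, 0 ≤ s → ∫ r in (0:ℝ)..s, W r * c r ^ p = c s - ε ^ κ := by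
      intro s hs
      set g : ℝ → ℝ := fun x => (q * x + ε) ^ (κ * p) with hgdef
      have hg_cont : Continuous g :=
        (Real.continuous_rpow_const (by positivity)).comp
          ((continuous_const.mul continuous_id).add continuous_const)
      have h1 : ∀ r, c r ^ p = g (Ω r) := by
        intro r
        show ((q * Ω r + ε) ^ κ) ^ p = (q * Ω r + ε) ^ (κ * p)
        rw [← Real.rpow_mul (hbase_pos r).le]
      have h2 := ww_pushforward W hW_meas hW_nonneg hW_int g hg_cont s hs
      have hexp : κ - 1 = κ * p := by
        calc κ - 1 = κ - κ * q := by rw [hκq]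
          _ = κ * (1 - q) := by ring
          _ = κ * p := by rw [hqdef]; ring
      have hD : ∀ x ∈ uIcc (0:ℝ) (Ω s), HasDerivAt (fun y => (q * y + ε) ^ κ) (g x) x := by
        intro x hx
        rw [uIcc_of_le (hΩ_nonneg s)] at hx
        have hxpos : 0 < q * x + ε := by
          have := mul_nonneg hq0.le hx.1
          linarith
        have hb : HasDerivAt (fun y : ℝ => q * y + ε) q x := by
          simpa using ((hasDerivAt_id x).const_mul q).add_const ε
        have hr : HasDerivAt (fun y : ℝ => y ^ κ) (κ * (q * x + ε) ^ (κ - 1)) (q * x + ε) :=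
          Real.hasDerivAt_rpow_const (Or.inl hxpos.ne')
        have hcomp := hr.comp x hb
        convert (show HasDerivAt (fun y => (q * y + ε) ^ κ) _ x from hcomp) using 1
        show g x = κ * (q * x + ε) ^ (κ - 1) * q
        have hg1 : g x = (q * x + ε) ^ (κ - 1) := by
          show (q * x + ε) ^ (κ * p) = (q * x + ε) ^ (κ - 1)
          rw [hexp]
        rw [hg1]
        have : κ * (q * x + ε) ^ (κ - 1) * q = (κ * q) * (q * x + ε) ^ (κ - 1) := by ring
        rw [this, hκq, one_mul]
      have hInt : IntervalIntegrable g volume 0 (Ω s) := hg_cont.intervalIntegrable _ _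
      calc ∫ r in (0:ℝ)..s, W r * c r ^ p
          = ∫ r in (0:ℝ)..s, W r * g (Ω r) :=
            intervalIntegral.integral_congr (fun r _ => by rw [h1 r])
        _ = ∫ x in (0:ℝ)..(Ω s), g x := h2
        _ = (q * Ω s + ε) ^ κ - (q * 0 + ε) ^ κ :=
            intervalIntegral.integral_eq_sub_of_hasDerivAt hD hInt
        _ = c s - ε ^ κ := by
            rw [show q * 0 + ε = ε from by ring]
    by_contra hcon
    push_neg at hcon
    obtain ⟨s₀, hs₀, hs₀lt⟩ := hcon
    set S : Set ℝ := {s | s ∈ Icc (0:ℝ) T ∧ c s ≤ z s} with hSdef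
    have hS_ne : S.Nonempty := ⟨s₀, hs₀, hs₀lt.le⟩
    have hS_bdd : BddBelow S := ⟨0, fun r hr => hr.1.1⟩
    have hS_closed : IsClosed S := by
      have hrw : S = Icc (0:ℝ) T ∩ {s | c s ≤ z s} := rfl
      rw [hrw]
      exact isClosed_Icc.inter (isClosed_le hc_cont hz_cont)
    set t₀ : ℝ := sInf S with ht₀def
    have ht₀S : t₀ ∈ S := hS_closed.csInf_mem hS_ne hS_bdd
    have ht₀Icc : t₀ ∈ Icc (0:ℝ) T := ht₀S.1
    have hlt : ∀ s ∈ Ioo (0:ℝ) t₀, z s ≤ c s := by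
      intro s hs
      by_contra hzc
      push_neg at hzc
      have hmem : s ∈ S := ⟨⟨hs.1.le, hs.2.le.trans ht₀Icc.2⟩, hzc.le⟩
      exact absurd (csInf_le hS_bdd hmem) (not_le.mpr hs.2)
    have h1 : z t₀ ≤ ∫ s in Ioc (0:ℝ) t₀, W s * z s ^ p := key1 t₀ ht₀Icc
    have hWcp_int : IntegrableOn (fun x => W x * c x ^ p) (Ioo 0 t₀) := by
      refine ww_bound_mul W (fun x => c x ^ p) measurableSet_Ioo hW_int.integrableOn
        ((Real.continuous_rpow_const hp0).comp hc_cont).measurable (C := (c T) ^ p) ?_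
      intro x hx
      rw [abs_of_nonneg (Real.rpow_nonneg (hc_nonneg x) p)]
      exact Real.rpow_le_rpow (hc_nonneg x) (hc_le x ⟨hx.1.le, hx.2.le.trans ht₀Icc.2⟩) hp0
    have h2 : ∫ s in Ioc (0:ℝ) t₀, W s * z s ^ p ≤ ∫ s in Ioc (0:ℝ) t₀, W s * c s ^ p := by
      rw [integral_Ioc_eq_integral_Ioo, integral_Ioc_eq_integral_Ioo]
      refine setIntegral_mono_on
        ((hWzp_int t₀ ht₀Icc).mono_set Ioo_subset_Ioc_self) hWcp_int measurableSet_Ioo ?_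
      intro s hs
      refine mul_le_mul_of_nonneg_left ?_ (hW_nonneg s)
      exact Real.rpow_le_rpow (hz_nonneg s) (hlt s hs) hp0
    have h3 : ∫ s in Ioc (0:ℝ) t₀, W s * c s ^ p = c t₀ - ε ^ κ := by
      rw [← intervalIntegral.integral_of_le ht₀Icc.1]
      exact hcid t₀ ht₀Icc.1
    have h4 : 0 < ε ^ κ := Real.rpow_pos_of_pos hε κ
    have h5 : c t₀ ≤ z t₀ := ht₀S.2
    linarith
  -- limit ε → 0 and conclusion
  intro t ht
  have hz_le : z t ≤ (q * Ω t) ^ κ := by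
    have htend : Filter.Tendsto (fun ε : ℝ => (q * Ω t + ε) ^ κ)
        (nhdsWithin 0 (Ioi 0)) (nhds ((q * Ω t) ^ κ)) := by
      have hcont : Continuous (fun ε : ℝ => (q * Ω t + ε) ^ κ) :=
        (Real.continuous_rpow_const hκ0.le).comp (continuous_const.add continuous_id)
      have h := hcont.tendsto 0
      simp only [add_zero] at h
      exact h.mono_left nhdsWithin_le_nhds
    refine ge_of_tendsto htend ?_
    filter_upwards [self_mem_nhdsWithin] with ε hε
    exact key2 ε hε t ht
  have hΩt : (∫ s in (0:ℝ)..t, w s * Real.exp (-q * ∫ r in (0:ℝ)..s, v r)) = Ω t := by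
    refine intervalIntegral.integral_congr (fun s hs => ?_)
    rw [uIcc_of_le ht.1] at hs
    have hsI : s ∈ Icc (0:ℝ) T := ⟨hs.1, hs.2.trans ht.2⟩
    show w s * Real.exp (-q * ∫ r in (0:ℝ)..s, v r) = wI s * Real.exp (-(q * V s))
    rw [hwIdef, Set.indicator_of_mem hsI w, ← hVeq s hsI, neg_mul]
  have hgoal : u t * Real.exp (-V t) ≤ (q * Ω t) ^ κ := by
    calc u t * Real.exp (-V t) ≤ a t * Real.exp (-V t) :=
          mul_le_mul_of_nonneg_right (hu_le_a t ht) (Real.exp_nonneg _)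
      _ = z t := rfl
      _ ≤ (q * Ω t) ^ κ := hz_le
  rw [hΩt, ← hVeq t ht]
  exact hgoal
end

section
/- Let T > 0, θ ∈ (0,1), C ≥ 0, and let u : [0,T] → ℝ be a nonnegative integrable function such that u(t) ≤ C·(∫₀ᵗ u(s) ds)^θ for all t ∈ [0,T]. Then u(t) ≤ C^{1/(1−θ)}·((1−θ)·t)^{θ/(1−θ)} for all t ∈ [0,T]. -/
open MeasureTheory Set Filter

/-- Nonlinear Gronwall inequality used for pathwise uniqueness. -/
theorem nonlinear_gronwall
    (T θ C : ℝ) (hT : 0 < T) (hθ0 : 0 < θ) (hθ1 : θ < 1) (hC : 0 ≤ C)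
    (u : ℝ → ℝ)
    (hu_nonneg : ∀ t ∈ Set.Icc (0:ℝ) T, 0 ≤ u t)
    (hu_int : IntegrableOn u (Set.Icc (0:ℝ) T))
    (h : ∀ t ∈ Set.Icc (0:ℝ) T, u t ≤ C * (∫ s in (0:ℝ)..t, u s) ^ θ) :
    ∀ t ∈ Set.Icc (0:ℝ) T,
      u t ≤ C ^ ((1:ℝ) / (1 - θ)) * ((1 - θ) * t) ^ (θ / (1 - θ)) := by
  have h1θ : 0 < 1 - θ := by linarith
  rcases eq_or_lt_of_le hC with hC0 | hCpos
  · -- trivial case C = 0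
    intro t ht
    have h1 := h t ht
    rw [← hC0] at h1 ⊢
    rw [Real.zero_rpow (by positivity : (1:ℝ)/(1-θ) ≠ 0)]
    simpa using h1
  set α : ℝ := 1 / (1 - θ) with hα
  have hα0 : 0 < α := by positivity
  set p : ℝ := θ / (1 - θ) with hp
  have hp0 : 0 < p := by positivity
  have hpα : p + 1 = α := by rw [hp, hα]; field_simp; ring
  have hαθ : α * θ = p := by rw [hα, hp]; ring
  set U : ℝ → ℝ := fun t => ∫ s in (0:ℝ)..t, u s with hU
  have hui : ∀ t ∈ Icc (0:ℝ) T, IntervalIntegrable u volume 0 t := by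
    intro t ht
    apply IntegrableOn.intervalIntegrable
    rw [uIcc_of_le ht.1]
    exact hu_int.mono_set (Icc_subset_Icc le_rfl ht.2)
  have hU0 : ∀ t ∈ Icc (0:ℝ) T, 0 ≤ U t := by
    intro t ht
    exact intervalIntegral.integral_nonneg ht.1
      (fun s hs => hu_nonneg s ⟨hs.1, hs.2.trans ht.2⟩)
  have hUmono : ∀ x t : ℝ, 0 ≤ x → x ≤ t → t ≤ T → U x ≤ U t := by
    intro x t hx hxt htT
    refine intervalIntegral.integral_mono_interval le_rfl hx hxt ?_
      (hui t ⟨hx.trans hxt, htT⟩)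
    filter_upwards [ae_restrict_mem measurableSet_Ioc] with s hs
    exact hu_nonneg s ⟨hs.1.le, hs.2.trans htT⟩
  -- the key iteration step
  have step : ∀ A : ℝ, 0 ≤ A → (∀ s ∈ Icc (0:ℝ) T, U s ≤ A * s ^ α) →
      ∀ s ∈ Icc (0:ℝ) T, U s ≤ (C * (1 - θ) * A ^ θ) * s ^ α := by
    intro A hA hbound s hs
    have h1 : U s ≤ ∫ x in (0:ℝ)..s, C * A ^ θ * x ^ p := by
      refine intervalIntegral.integral_mono_on hs.1 (hui s hs)
        ((intervalIntegral.intervalIntegrable_rpow' (by linarith)).const_mul _) ?_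
      intro x hx
      have hxT : x ∈ Icc (0:ℝ) T := ⟨hx.1, hx.2.trans hs.2⟩
      calc u x ≤ C * (U x) ^ θ := h x hxT
        _ ≤ C * (A * x ^ α) ^ θ := by
            have := Real.rpow_le_rpow (hU0 x hxT) (hbound x hxT) hθ0.le
            exact mul_le_mul_of_nonneg_left this hC
        _ = C * A ^ θ * x ^ p := by
            rw [Real.mul_rpow hA (Real.rpow_nonneg hx.1 _), ← Real.rpow_mul hx.1,
              hαθ]
            ring
    have h2 : (∫ x in (0:ℝ)..s, C * A ^ θ * x ^ p) = (C * (1 - θ) * A ^ θ) * s ^ α := by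
      rw [intervalIntegral.integral_const_mul,
        integral_rpow (Or.inl (by linarith : (-1:ℝ) < p)),
        Real.zero_rpow (by positivity : p + 1 ≠ 0), hpα, sub_zero]
      have hdiv : s ^ α / α = s ^ α * (1 - θ) := by
        rw [hα]; field_simp
      rw [hdiv]; ring
    exact h1.trans_eq h2
  -- the crude a-priori bound
  have hbase : ∀ s ∈ Icc (0:ℝ) T, U s ≤ C ^ α * s ^ α := by
    intro s hs
    have hcrude : U s ≤ C * (U s) ^ θ * s := by
      have h1 : U s ≤ ∫ x in (0:ℝ)..s, C * (U s) ^ θ := by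
        refine intervalIntegral.integral_mono_on hs.1 (hui s hs)
          intervalIntegrable_const ?_
        intro x hx
        have hxT : x ∈ Icc (0:ℝ) T := ⟨hx.1, hx.2.trans hs.2⟩
        calc u x ≤ C * (U x) ^ θ := h x hxT
          _ ≤ C * (U s) ^ θ := by
              have := Real.rpow_le_rpow (hU0 x hxT)
                (hUmono x s hx.1 hx.2 hs.2) hθ0.le
              exact mul_le_mul_of_nonneg_left this hC
      rw [intervalIntegral.integral_const, smul_eq_mul, sub_zero] at h1
      linarith [h1]
    rcases (hU0 s hs).eq_or_lt with hU0' | hUpos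
    · rw [← hU0']
      exact mul_nonneg (Real.rpow_nonneg hC _) (Real.rpow_nonneg hs.1 _)
    · have hcancel : (U s) ^ (1 - θ) ≤ C * s := by
        have hsplit : U s = (U s) ^ (1 - θ) * (U s) ^ θ := by
          rw [← Real.rpow_add hUpos]
          norm_num
        have hθpos : 0 < (U s) ^ θ := Real.rpow_pos_of_pos hUpos θ
        have h2 : (U s) ^ (1 - θ) * (U s) ^ θ ≤ (C * s) * (U s) ^ θ := by
          rw [← hsplit]
          calc U s ≤ C * (U s) ^ θ * s := hcrude
            _ = (C * s) * (U s) ^ θ := by ring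
        exact le_of_mul_le_mul_right h2 hθpos
      have h3 : ((U s) ^ (1 - θ)) ^ α ≤ (C * s) ^ α :=
        Real.rpow_le_rpow (Real.rpow_nonneg (hU0 s hs) _) hcancel hα0.le
      have h4 : ((U s) ^ (1 - θ)) ^ α = U s := by
        rw [hα, one_div]
        exact Real.rpow_rpow_inv (hU0 s hs) (by linarith)
      rw [h4, Real.mul_rpow hC hs.1] at h3
      exact h3
  -- iterate
  set Astar : ℝ := (C * (1 - θ)) ^ α with hAstar
  set D : ℝ := (1 - θ) ^ (-α) with hD
  have hCθpos : 0 < C * (1 - θ) := by positivity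
  have hAstarpos : 0 < Astar := Real.rpow_pos_of_pos hCθpos _
  have hDpos : 0 < D := Real.rpow_pos_of_pos h1θ _
  have hAD : Astar * D = C ^ α := by
    rw [hAstar, hD, Real.mul_rpow hC h1θ.le, mul_assoc, ← Real.rpow_add h1θ]
    simp
  have hfix : C * (1 - θ) * Astar ^ θ = Astar := by
    rw [hAstar, ← Real.rpow_mul hCθpos.le, hαθ]
    nth_rewrite 1 [← Real.rpow_one (C * (1 - θ))]
    rw [← Real.rpow_add hCθpos]
    rw [show (1:ℝ) + p = α by linarith]
  have hind : ∀ n : ℕ, ∀ s ∈ Icc (0:ℝ) T, U s ≤ (Astar * D ^ ((θ ^ n : ℝ))) * s ^ α := by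
    intro n
    induction n with
    | zero =>
        intro s hs
        simpa [hAD, Real.rpow_one] using hbase s hs
    | succ n ih =>
        intro s hs
        have hAn : 0 ≤ Astar * D ^ ((θ ^ n : ℝ)) := by positivity
        have := step _ hAn ih s hs
        have heq : C * (1 - θ) * (Astar * D ^ ((θ ^ n : ℝ))) ^ θ
            = Astar * D ^ ((θ ^ (n+1) : ℝ)) := by
          rw [Real.mul_rpow hAstarpos.le (by positivity),
            ← Real.rpow_mul hDpos.le, ← pow_succ]
          linear_combination D ^ ((θ ^ (n+1) : ℝ)) * hfix
        rwa [heq] at this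
  -- take the limit
  intro t ht
  have hlim : U t ≤ Astar * t ^ α := by
    have hexp : Tendsto (fun n : ℕ => (θ ^ n : ℝ)) atTop (nhds 0) :=
      tendsto_pow_atTop_nhds_zero_of_lt_one hθ0.le hθ1
    have hcont : ContinuousAt (fun x : ℝ => D ^ x) 0 :=
      Real.continuousAt_const_rpow hDpos.ne'
    have hten : Tendsto (fun n : ℕ => (Astar * D ^ ((θ ^ n : ℝ))) * t ^ α) atTop
        (nhds ((Astar * D ^ (0:ℝ)) * t ^ α)) := by
      exact (((hcont.tendsto.comp hexp).const_mul Astar).mul_const _)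
    have := ge_of_tendsto' hten (fun n => hind n t ht)
    simpa [Real.rpow_zero] using this
  have hfin : u t ≤ C * (Astar * t ^ α) ^ θ := by
    calc u t ≤ C * (U t) ^ θ := h t ht
      _ ≤ C * (Astar * t ^ α) ^ θ := by
          have := Real.rpow_le_rpow (hU0 t ht) hlim hθ0.le
          exact mul_le_mul_of_nonneg_left this hC
  have heq : C * (Astar * t ^ α) ^ θ = C ^ α * ((1 - θ) * t) ^ p := by
    rw [Real.mul_rpow hAstarpos.le (Real.rpow_nonneg ht.1 _),
      ← Real.rpow_mul ht.1, hαθ, hAstar, ← Real.rpow_mul hCθpos.le, hαθ,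
      Real.mul_rpow hC h1θ.le, Real.mul_rpow h1θ.le ht.1]
    nth_rewrite 1 [← Real.rpow_one C]
    rw [show C ^ (1:ℝ) * (C ^ p * (1 - θ) ^ p * t ^ p)
        = (C ^ (1:ℝ) * C ^ p) * ((1 - θ) ^ p * t ^ p) by ring,
      ← Real.rpow_add hCpos, show (1:ℝ) + p = α by linarith]
  rw [heq] at hfin
  exact hfin
end

section
/- For every r ∈ (0,1), the products ∏_{k=2}^{n−1} ( 1/(1 − r^k) )^{ r^{n−k} } converge to 1 as n → ∞. -/
open Filter

/-- The products `∏_{k=2}^{n-1} (1/(1 - r^k))^{r^{n-k}}` converge to `1` as `n → ∞`,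
for every `r ∈ (0,1)`. -/
theorem prod_rpow_tendsto_one
    (r : ℝ) (hr0 : 0 < r) (hr1 : r < 1) :
    Tendsto (fun n : ℕ =>
        ∏ k ∈ Finset.Ico 2 n, ((1 / (1 - r ^ k)) ^ ((r ^ (n - k) : ℝ)) : ℝ))
      atTop (nhds 1) := by
  have hrk : ∀ k : ℕ, 1 ≤ k → r ^ k < 1 := fun k hk =>
    pow_lt_one₀ hr0.le hr1 (by omega)
  have hpos : ∀ k : ℕ, 1 ≤ k → (0 : ℝ) < 1 / (1 - r ^ k) := fun k hk =>
    one_div_pos.mpr (by linarith [hrk k hk])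
  -- rewrite the product as exp of a sum
  set S : ℕ → ℝ := fun n => ∑ k ∈ Finset.Ico 2 n,
      Real.log (1 / (1 - r ^ k)) * r ^ (n - k) with hS
  have key : ∀ n : ℕ,
      (∏ k ∈ Finset.Ico 2 n, ((1 / (1 - r ^ k)) ^ ((r ^ (n - k) : ℝ)) : ℝ))
        = Real.exp (S n) := by
    intro n
    rw [hS, Real.exp_sum]
    refine Finset.prod_congr rfl fun k hk => ?_
    have hk2 : 2 ≤ k := (Finset.mem_Ico.mp hk).1
    rw [Real.rpow_def_of_pos (hpos k (by omega))]
  have hSbound : ∀ n : ℕ, S n ≤ (n : ℝ) * r ^ n / (1 - r) := by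
    intro n
    have h1 : S n ≤ ∑ k ∈ Finset.Ico 2 n, r ^ n / (1 - r) := by
      refine Finset.sum_le_sum fun k hk => ?_
      obtain ⟨hk2, hkn⟩ := Finset.mem_Ico.mp hk
      have hk1 : 1 ≤ k := by omega
      have hlog : Real.log (1 / (1 - r ^ k)) ≤ r ^ k / (1 - r) := by
        have := Real.log_le_sub_one_of_pos (hpos k hk1)
        have hkr : r ^ k ≤ r := by
          simpa using pow_le_pow_of_le_one hr0.le hr1.le hk1
        have hne : 1 - r ^ k ≠ 0 := by
          have := hrk k hk1; intro h; rw [sub_eq_zero] at h; linarith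
        have h2 : 1 / (1 - r ^ k) - 1 = r ^ k / (1 - r ^ k) := by
          field_simp
          ring
        have h3 : r ^ k / (1 - r ^ k) ≤ r ^ k / (1 - r) :=
          div_le_div_of_nonneg_left (pow_nonneg hr0.le k) (by linarith) (by linarith)
        linarith
      calc Real.log (1 / (1 - r ^ k)) * r ^ (n - k)
          ≤ (r ^ k / (1 - r)) * r ^ (n - k) := by
            apply mul_le_mul_of_nonneg_right hlog (pow_nonneg hr0.le _)
        _ = r ^ n / (1 - r) := by
            rw [div_mul_eq_mul_div, ← pow_add]
            congr 2
            omega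
    have h2 : ∑ k ∈ Finset.Ico 2 n, r ^ n / (1 - r)
        = ((Finset.Ico 2 n).card : ℝ) * (r ^ n / (1 - r)) := by
      rw [Finset.sum_const, nsmul_eq_mul]
    have h3 : ((Finset.Ico 2 n).card : ℝ) ≤ (n : ℝ) := by
      rw [Nat.card_Ico]; exact_mod_cast Nat.sub_le n 2
    have h4 : (0 : ℝ) ≤ r ^ n / (1 - r) :=
      div_nonneg (pow_nonneg hr0.le n) (by linarith)
    calc S n ≤ ((Finset.Ico 2 n).card : ℝ) * (r ^ n / (1 - r)) := by
          rw [← h2]; exact h1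
      _ ≤ (n : ℝ) * (r ^ n / (1 - r)) := mul_le_mul_of_nonneg_right h3 h4
      _ = (n : ℝ) * r ^ n / (1 - r) := by ring
  have hSnonneg : ∀ n : ℕ, 0 ≤ S n := by
    intro n
    refine Finset.sum_nonneg fun k hk => ?_
    have hk1 : 1 ≤ k := by have := (Finset.mem_Ico.mp hk).1; omega
    refine mul_nonneg ?_ (pow_nonneg hr0.le _)
    refine Real.log_nonneg ?_
    rw [le_div_iff₀ (by linarith [hrk k hk1])]
    nlinarith [pow_nonneg hr0.le k]
  -- the bound tends to 0
  have hb : Tendsto (fun n : ℕ => (n : ℝ) * r ^ n / (1 - r)) atTop (nhds 0) := by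
    have hsum : Summable (fun n : ℕ => (n : ℝ) ^ 1 * r ^ n) :=
      summable_pow_mul_geometric_of_norm_lt_one 1 (by rw [Real.norm_eq_abs, abs_of_pos hr0]; exact hr1)
    have := (hsum.tendsto_atTop_zero).div_const (1 - r)
    simpa using this
  have hS0 : Tendsto S atTop (nhds 0) :=
    tendsto_of_tendsto_of_tendsto_of_le_of_le tendsto_const_nhds hb hSnonneg hSbound
  have : Tendsto (fun n => Real.exp (S n)) atTop (nhds 1) := by
    simpa [Function.comp_def] using (Real.continuous_exp.tendsto 0).comp hS0
  exact this.congr fun n => (key n).symm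
end

section
/- For every r ∈ (0,1), the sums ∑_{k=2}^{n−1} r^{n−k} · log( 1/(1 − r^k) ) converge to 0 as n → ∞. -/
open Filter

/-- The sums `∑_{k=2}^{n-1} r^{n-k} log(1/(1 - r^k))` converge to `0` as `n → ∞`,
for every `r ∈ (0,1)`. -/
theorem sum_log_tendsto_zero
    (r : ℝ) (hr0 : 0 < r) (hr1 : r < 1) :
    Tendsto (fun n : ℕ =>
        ∑ k ∈ Finset.Ico 2 n, r ^ (n - k) * Real.log (1 / (1 - r ^ k)))
      atTop (nhds 0) := by
  -- basic facts
  have hrpow_lt_one : ∀ k : ℕ, 1 ≤ k → r ^ k < 1 := fun k hk =>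
    pow_lt_one₀ hr0.le hr1 (by omega)
  have hsub_pos : ∀ k : ℕ, 1 ≤ k → 0 < 1 - r ^ k := fun k hk =>
    sub_pos.mpr (hrpow_lt_one k hk)
  set C : ℝ := Real.log (1 / (1 - r ^ 2)) with hC
  have h2pos : (0:ℝ) < 1 - r ^ 2 := hsub_pos 2 (by norm_num)
  have hCnonneg : 0 ≤ C := by
    apply Real.log_nonneg
    rw [le_div_iff₀ h2pos]
    nlinarith [pow_pos hr0 2]
  set D : ℝ := 1 / (1 - r) with hD
  have h1r : (0:ℝ) < 1 - r := by linarith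
  -- L m := log (1 / (1 - r ^ m)) is nonneg for m ≥ 1
  have hLnonneg : ∀ m : ℕ, 1 ≤ m → 0 ≤ Real.log (1 / (1 - r ^ m)) := by
    intro m hm
    apply Real.log_nonneg
    rw [le_div_iff₀ (hsub_pos m hm)]
    nlinarith [pow_pos hr0 m]
  -- monotonicity of L : if i ≤ j then L j ≤ L i (for 1 ≤ i)
  have hLmono : ∀ i j : ℕ, 1 ≤ i → i ≤ j →
      Real.log (1 / (1 - r ^ j)) ≤ Real.log (1 / (1 - r ^ i)) := by
    intro i j hi hij
    have hj : 0 < 1 - r ^ j := hsub_pos j (by omega)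
    apply Real.log_le_log (by positivity)
    apply one_div_le_one_div_of_le (hsub_pos i hi)
    have : r ^ j ≤ r ^ i := pow_le_pow_of_le_one hr0.le hr1.le hij
    linarith
  -- geometric sum bound : ∑_{k∈Ico a n} r^{n-k} ≤ D
  have hgeom : ∀ a n : ℕ, ∑ k ∈ Finset.Ico a n, r ^ (n - k) ≤ D := by
    intro a n
    have h1 : ∑ k ∈ Finset.Ico a n, r ^ (n - k) ≤ ∑ k ∈ Finset.range n, r ^ (n - k) := by
      apply Finset.sum_le_sum_of_subset_of_nonneg
      · intro x hx
        simp only [Finset.mem_Ico] at hx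
        exact Finset.mem_range.mpr hx.2
      · intro i _ _; positivity
    have h2 : ∑ k ∈ Finset.range n, r ^ (n - k) ≤ ∑ k ∈ Finset.range n, r ^ k := by
      rw [← Finset.sum_range_reflect (fun k => r ^ (n - k)) n]
      apply Finset.sum_le_sum
      intro i hi
      simp only [Finset.mem_range] at hi
      apply pow_le_pow_of_le_one hr0.le hr1.le
      omega
    have h3 : ∑ k ∈ Finset.range n, r ^ k ≤ D := by
      have hgm := geom_sum_mul r n
      have hpn : (0:ℝ) ≤ r ^ n := by positivity
      rw [hD, le_div_iff₀ h1r]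
      nlinarith
    linarith
  -- the bounding sequence
  set B : ℕ → ℝ := fun n => (n : ℝ) * r ^ (n / 2) * C
      + D * Real.log (1 / (1 - r ^ (n / 2))) with hB
  -- B tends to 0
  have hdiv : Tendsto (fun n : ℕ => n / 2) atTop atTop := by
    apply tendsto_atTop_atTop.mpr
    intro b
    exact ⟨2 * b, fun a ha => by omega⟩
  have hpowhalf : Tendsto (fun n : ℕ => r ^ (n / 2)) atTop (nhds 0) :=
    (tendsto_pow_atTop_nhds_zero_of_lt_one hr0.le hr1).comp hdiv
  have hBtendsto : Tendsto B atTop (nhds 0) := by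
    have hA : Tendsto (fun n : ℕ => (n : ℝ) * r ^ (n / 2)) atTop (nhds 0) := by
      set s : ℝ := Real.sqrt r with hs
      have hs0 : 0 < s := Real.sqrt_pos.mpr hr0
      have hs1 : s < 1 := by
        rw [hs, show (1:ℝ) = Real.sqrt 1 by simp]
        exact Real.sqrt_lt_sqrt hr0.le hr1
      have hsq : s ^ 2 = r := Real.sq_sqrt hr0.le
      have hmul : Tendsto (fun n : ℕ => (1 / s) * ((n : ℝ) * s ^ n)) atTop (nhds 0) := by
        have := (tendsto_self_mul_const_pow_of_lt_one hs0.le hs1).const_mul (1 / s)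
        simpa using this
      apply squeeze_zero' (g := fun n : ℕ => (1 / s) * ((n : ℝ) * s ^ n))
        (Eventually.of_forall fun n => by positivity) _ hmul
      filter_upwards [eventually_ge_atTop 1] with n hn
      have hr_eq : r ^ (n / 2) = s ^ (2 * (n / 2)) := by
        rw [pow_mul, hsq]
      have hle : s ^ (2 * (n / 2)) ≤ s ^ (n - 1) :=
        pow_le_pow_of_le_one hs0.le hs1.le (by omega)
      have h2 : s ^ (n - 1) = s ^ n / s := by
        rw [eq_div_iff hs0.ne', ← pow_succ]
        congr 1
        omega
      calc (n : ℝ) * r ^ (n / 2) ≤ (n : ℝ) * (s ^ n / s) := by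
            rw [hr_eq] at *
            apply mul_le_mul_of_nonneg_left (hle.trans_eq h2) (Nat.cast_nonneg n)
        _ = 1 / s * ((n : ℝ) * s ^ n) := by ring
    have hL : Tendsto (fun n : ℕ => Real.log (1 / (1 - r ^ (n / 2)))) atTop (nhds 0) := by
      have hc2 : ContinuousAt (fun x : ℝ => 1 / (1 - x)) 0 :=
        ContinuousAt.div continuousAt_const (continuousAt_const.sub continuousAt_id)
          (by norm_num)
      have hcont : ContinuousAt (fun x : ℝ => Real.log (1 / (1 - x))) 0 :=
        hc2.log (by norm_num)
      have := hcont.tendsto.comp hpowhalf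
      simpa [Function.comp_def] using this
    have := (hA.mul_const C).add (hL.const_mul D)
    simpa only [zero_mul, mul_zero, add_zero] using this
  -- squeeze
  apply squeeze_zero' _ _ hBtendsto
  · filter_upwards with n
    apply Finset.sum_nonneg
    intro k hk
    simp only [Finset.mem_Ico] at hk
    have := hLnonneg k (by omega)
    positivity
  · filter_upwards [eventually_ge_atTop 4] with n hn
    have hsplit : Finset.Ico 2 n = Finset.Ico 2 (n / 2 + 1) ∪ Finset.Ico (n / 2 + 1) n := by
      rw [Finset.Ico_union_Ico_eq_Ico (by omega) (by omega)]
    rw [hsplit, Finset.sum_union (Finset.Ico_disjoint_Ico_consecutive 2 (n / 2 + 1) n)]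
    have hhalf1 : 1 ≤ n / 2 := by omega
    apply add_le_add
    · -- first part: k ≤ n/2
      calc ∑ k ∈ Finset.Ico 2 (n / 2 + 1), r ^ (n - k) * Real.log (1 / (1 - r ^ k))
          ≤ ∑ k ∈ Finset.Ico 2 (n / 2 + 1), r ^ (n / 2) * C := by
            apply Finset.sum_le_sum
            intro k hk
            simp only [Finset.mem_Ico] at hk
            apply mul_le_mul
            · exact pow_le_pow_of_le_one hr0.le hr1.le (by omega)
            · exact hLmono 2 k (by norm_num) hk.1
            · exact hLnonneg k (by omega)
            · positivity
        _ = ((n / 2 + 1 - 2 : ℕ) : ℝ) * (r ^ (n / 2) * C) := by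
            rw [Finset.sum_const, Nat.card_Ico, nsmul_eq_mul]
        _ ≤ (n : ℝ) * (r ^ (n / 2) * C) := by
            apply mul_le_mul_of_nonneg_right _ (by positivity)
            exact Nat.cast_le.mpr (by omega)
        _ = (n : ℝ) * r ^ (n / 2) * C := by ring
    · -- second part: k > n/2
      calc ∑ k ∈ Finset.Ico (n / 2 + 1) n, r ^ (n - k) * Real.log (1 / (1 - r ^ k))
          ≤ ∑ k ∈ Finset.Ico (n / 2 + 1) n, r ^ (n - k) * Real.log (1 / (1 - r ^ (n / 2))) := by
            apply Finset.sum_le_sum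
            intro k hk
            simp only [Finset.mem_Ico] at hk
            apply mul_le_mul_of_nonneg_left _ (by positivity)
            exact hLmono (n / 2) k hhalf1 (by omega)
        _ = (∑ k ∈ Finset.Ico (n / 2 + 1) n, r ^ (n - k)) * Real.log (1 / (1 - r ^ (n / 2))) := by
            rw [Finset.sum_mul]
        _ ≤ D * Real.log (1 / (1 - r ^ (n / 2))) := by
            apply mul_le_mul_of_nonneg_right (hgeom _ _) (hLnonneg _ hhalf1)
end
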